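/- Let D ≥ 1 and let w ∈ ℝ^D be a weight vector with strictly decreasing positive components w₁ > w₂ > … > w_D > 0. The generalized Gini social welfare function is monotone with respect to Pareto dominance: if u, v ∈ ℝ^D satisfy u_i ≥ v_i for all i, then GGF_w(u) ≥ GGF_w(v); moreover, if in addition u_j > v_j for some j, then GGF_w(u) > GGF_w(v). -/

import Mathlib

open Finset

/-- Generalized Gini social welfare function: weighted sum of the components of `v`
sorted in increasing order. -/
noncomputable def GGF {D : ℕ} (w v : Fin D → ℝ) : ℝ :=
  ∑ i, w i * v (Tuple.sort v i)

/-- The sorted arrangement minimizes the weighted sum. -/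
lemma GGF_le_perm {D : ℕ} (w v : Fin D → ℝ) (hw : StrictAnti w)
    (σ : Equiv.Perm (Fin D)) : GGF w v ≤ ∑ i, w i * v (σ i) := by
  have hanti : Antivary w (v ∘ Tuple.sort v) := by
    intro i j hij
    by_contra h
    push_neg at h
    exact absurd (Tuple.monotone_sort v (le_of_lt (hw.lt_iff_gt.mp h))) (not_le.mpr hij)
  have key := hanti.sum_mul_le_sum_mul_comp_perm
      (σ := σ.trans (Tuple.sort v)⁻¹)
  simpa [GGF, Function.comp] using key

/-- for strictly decreasing positive weights, GGF is monotone with respect to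
(weak and strict) Pareto dominance. -/
theorem ggf_pareto_monotone {D : ℕ} (hD : 1 ≤ D) (w : Fin D → ℝ)
    (hw : StrictAnti w) (hwpos : ∀ i, 0 < w i)
    (u v : Fin D → ℝ) (hdom : ∀ i, v i ≤ u i) :
    GGF w v ≤ GGF w u ∧ ((∃ j, v j < u j) → GGF w v < GGF w u) := by
  have h1 : GGF w v ≤ ∑ i, w i * v (Tuple.sort u i) := GGF_le_perm w v hw _
  constructor
  · refine h1.trans (Finset.sum_le_sum fun i _ => ?_)
    exact mul_le_mul_of_nonneg_left (hdom _) (hwpos i).le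
  · rintro ⟨j, hj⟩
    refine h1.trans_lt (Finset.sum_lt_sum (fun i _ => mul_le_mul_of_nonneg_left (hdom _) (hwpos i).le) ?_)
    refine ⟨(Tuple.sort u)⁻¹ j, Finset.mem_univ _, ?_⟩
    have : Tuple.sort u ((Tuple.sort u)⁻¹ j) = j := Equiv.apply_symm_apply _ j
    rw [this]
    exact mul_lt_mul_of_pos_left hj (hwpos _)
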